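/- The Loss–Yau spinor φ(x) = ⟨x⟩⁻³(I₂ + i σ·x)φ₀, with φ₀ = (1,0)ᵀ and ⟨x⟩ = √(1+|x|²), is a zero mode of the Weyl–Dirac operator σ·(D − A(x)) with the vector potential A(x) = 3⟨x⟩⁻⁴{(1−|x|²)w₀ + 2(w₀·x)x + 2 w₀×x}, where w₀ = (⟨φ₀, σ₁φ₀⟩, ⟨φ₀, σ₂φ₀⟩, ⟨φ₀, σ₃φ₀⟩); that is, σ·Dφ = (σ·A)φ pointwise on ℝ³. -/

import Mathlib

open Matrix
noncomputable section

/-- The Pauli matrices `σ₁, σ₂, σ₃`. -/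
def pauli : Fin 3 → Matrix (Fin 2) (Fin 2) ℂ :=
  ![!![0, 1; 1, 0], !![0, -Complex.I; Complex.I, 0], !![1, 0; 0, -1]]

/-- The fixed spinor `φ₀ = (1, 0)ᵀ`. -/
def phi0 : Fin 2 → ℂ := ![1, 0]

/-- `w₀ = (⟨φ₀, σ₁φ₀⟩, ⟨φ₀, σ₂φ₀⟩, ⟨φ₀, σ₃φ₀⟩)`. -/
def w0 : Fin 3 → ℂ := fun j => dotProduct (star phi0) ((pauli j).mulVec phi0)

/-- A point of `ℝ³` viewed as a complex vector. -/
def xc (x : EuclideanSpace ℝ (Fin 3)) : Fin 3 → ℂ := fun j => (x j : ℂ)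

/-- The cross product on `ℂ³`. -/
def cross3 (a b : Fin 3 → ℂ) : Fin 3 → ℂ :=
  ![a 1 * b 2 - a 2 * b 1, a 2 * b 0 - a 0 * b 2, a 0 * b 1 - a 1 * b 0]

/-- The Loss–Yau vector potential
`A(x) = 3⟨x⟩⁻⁴ {(1 - |x|²) w₀ + 2 (w₀·x) x + 2 w₀ × x}`. -/
def lossYauA (x : EuclideanSpace ℝ (Fin 3)) : Fin 3 → ℂ := fun j =>
  ((3 * ((1 + ‖x‖ ^ 2) ^ 2)⁻¹ : ℝ) : ℂ) *
    ((1 - (‖x‖ : ℂ) ^ 2) * w0 j + 2 * (∑ k, w0 k * xc x k) * xc x j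
      + 2 * cross3 w0 (xc x) j)

/-- The Loss–Yau spinor `φ(x) = ⟨x⟩⁻³ (I₂ + i σ·x) φ₀`. -/
def lossYauSpinor (x : EuclideanSpace ℝ (Fin 3)) : Fin 2 → ℂ :=
  ((Real.sqrt (1 + ‖x‖ ^ 2))⁻¹ ^ 3 : ℝ) •
    ((1 : Matrix (Fin 2) (Fin 2) ℂ) + Complex.I • (∑ j, xc x j • pauli j)).mulVec phi0

/-! ### Auxiliary definitions and lemmas -/

/-- The scalar prefactor `⟨x⟩⁻³`. -/
def sfun (x : EuclideanSpace ℝ (Fin 3)) : ℝ := (Real.sqrt (1 + ‖x‖ ^ 2))⁻¹ ^ 3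

lemma spinor_eq (x : EuclideanSpace ℝ (Fin 3)) :
    lossYauSpinor x = ![(sfun x : ℂ) * (1 + Complex.I * (x 2 : ℂ)),
      (sfun x : ℂ) * (Complex.I * (x 0 : ℂ) - (x 1 : ℂ))] := by
  funext i
  have h2 : (Complex.I)^2 = -1 := Complex.I_sq
  fin_cases i
  · simp [lossYauSpinor, sfun, pauli, phi0, xc, Matrix.mulVec, dotProduct,
      Fin.sum_univ_three, Matrix.sum_apply, Matrix.one_apply, mul_add]
  · simp [lossYauSpinor, sfun, pauli, phi0, xc, Matrix.mulVec, dotProduct,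
      Fin.sum_univ_three, Matrix.sum_apply, Matrix.one_apply, mul_add]
    linear_combination (((Real.sqrt (1 + ‖x‖ ^ 2) : ℂ))⁻¹^3 * (x 1 : ℂ)) * h2

lemma hasFDerivAt_sfun (x : EuclideanSpace ℝ (Fin 3)) :
    HasFDerivAt sfun ((-3 * (Real.sqrt (1 + ‖x‖ ^ 2))⁻¹ ^ 5) • innerSL ℝ x) x := by
  have ht : (0:ℝ) < 1 + ‖x‖ ^ 2 := by positivity
  have hq : HasFDerivAt (fun y : EuclideanSpace ℝ (Fin 3) => 1 + ‖y‖ ^ 2)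
      ((2:ℕ) • innerSL ℝ x) x := by
    have := (hasFDerivAt_id x).norm_sq.const_add 1
    simpa using this
  have hsq := Real.hasDerivAt_sqrt (ne_of_gt ht)
  have hsqpos : 0 < Real.sqrt (1 + ‖x‖ ^ 2) := Real.sqrt_pos.2 ht
  have hinv := hsq.inv (ne_of_gt hsqpos)
  have hpow := hinv.pow 3
  have := hpow.comp_hasFDerivAt x hq
  refine this.congr_fderiv (Eq.symm ?_)
  ext v
  have ha : Real.sqrt (1 + ‖x‖ ^ 2) ^ 2 = 1 + ‖x‖ ^ 2 := Real.sq_sqrt (le_of_lt ht)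
  simp only [ContinuousLinearMap.coe_smul', Pi.smul_apply, ContinuousLinearMap.coe_comp',
    Function.comp_apply, smul_eq_mul]
  field_simp
  ring_nf
  rw [Pi.inv_apply, inv_pow, mul_inv_cancel_right₀ (pow_ne_zero 2 hsqpos.ne')]

/-- Coordinate, as a ℂ-valued continuous linear map. -/
def coordC (j : Fin 3) : EuclideanSpace ℝ (Fin 3) →L[ℝ] ℂ :=
  Complex.ofRealCLM.comp (EuclideanSpace.proj j)

def sC' (x : EuclideanSpace ℝ (Fin 3)) : EuclideanSpace ℝ (Fin 3) →L[ℝ] ℂ :=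
  Complex.ofRealCLM.comp ((-3 * (Real.sqrt (1 + ‖x‖ ^ 2))⁻¹ ^ 5) • innerSL ℝ x)

def L0 (x : EuclideanSpace ℝ (Fin 3)) : EuclideanSpace ℝ (Fin 3) →L[ℝ] ℂ :=
  ((sfun x : ℂ)) • (Complex.I • coordC 2) + (1 + Complex.I * (x 2 : ℂ)) • sC' x

def L1 (x : EuclideanSpace ℝ (Fin 3)) : EuclideanSpace ℝ (Fin 3) →L[ℝ] ℂ :=
  ((sfun x : ℂ)) • (Complex.I • coordC 0 - coordC 1) + (Complex.I * (x 0 : ℂ) - (x 1 : ℂ)) • sC' x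

lemma h0 (x : EuclideanSpace ℝ (Fin 3)) :
    HasFDerivAt (fun y : EuclideanSpace ℝ (Fin 3) => (sfun y : ℂ) * (1 + Complex.I * (y 2 : ℂ)))
      (L0 x) x := by
  have hs : HasFDerivAt (fun y : EuclideanSpace ℝ (Fin 3) => ((sfun y : ℝ) : ℂ)) (sC' x) x :=
    Complex.ofRealCLM.hasFDerivAt.comp x (hasFDerivAt_sfun x)
  have hc : HasFDerivAt (fun y : EuclideanSpace ℝ (Fin 3) => (1 : ℂ) + Complex.I * (y 2 : ℂ))
      (Complex.I • coordC 2) x :=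
    (((coordC 2).hasFDerivAt (x := x)).const_mul Complex.I).const_add 1
  exact hs.mul hc

lemma h1 (x : EuclideanSpace ℝ (Fin 3)) :
    HasFDerivAt (fun y : EuclideanSpace ℝ (Fin 3) =>
        (sfun y : ℂ) * (Complex.I * (y 0 : ℂ) - (y 1 : ℂ)))
      (L1 x) x := by
  have hs : HasFDerivAt (fun y : EuclideanSpace ℝ (Fin 3) => ((sfun y : ℝ) : ℂ)) (sC' x) x :=
    Complex.ofRealCLM.hasFDerivAt.comp x (hasFDerivAt_sfun x)
  have hc : HasFDerivAt (fun y : EuclideanSpace ℝ (Fin 3) => Complex.I * (y 0 : ℂ) - (y 1 : ℂ))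
      (Complex.I • coordC 0 - coordC 1) x :=
    (((coordC 0).hasFDerivAt (x := x)).const_mul Complex.I).sub ((coordC 1).hasFDerivAt (x := x))
  exact hs.mul hc

lemma spinor_hasFDerivAt (x : EuclideanSpace ℝ (Fin 3)) :
    HasFDerivAt (fun y : EuclideanSpace ℝ (Fin 3) =>
        (![(sfun y : ℂ) * (1 + Complex.I * (y 2 : ℂ)),
           (sfun y : ℂ) * (Complex.I * (y 0 : ℂ) - (y 1 : ℂ))] : Fin 2 → ℂ))
      (ContinuousLinearMap.pi ![L0 x, L1 x]) x := by
  apply hasFDerivAt_pi''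
  intro i
  fin_cases i
  · simpa [ContinuousLinearMap.ext_iff] using h0 x
  · simpa [ContinuousLinearMap.ext_iff] using h1 x

lemma fderiv_eval (x : EuclideanSpace ℝ (Fin 3)) (j : Fin 3) :
    (ContinuousLinearMap.pi ![L0 x, L1 x]) (EuclideanSpace.single j (1:ℝ)) =
    ![ (sfun x : ℂ) * (Complex.I * (if j = 2 then 1 else 0))
        + (1 + Complex.I * (x 2 : ℂ)) * ((-3 * (Real.sqrt (1 + ‖x‖ ^ 2))⁻¹ ^ 5 * x j : ℝ) : ℂ),
       (sfun x : ℂ) * (Complex.I * (if j = 0 then 1 else 0) - (if j = 1 then 1 else 0))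
        + (Complex.I * (x 0 : ℂ) - (x 1 : ℂ))
          * ((-3 * (Real.sqrt (1 + ‖x‖ ^ 2))⁻¹ ^ 5 * x j : ℝ) : ℂ)] := by
  have hinner : (innerSL ℝ x) (EuclideanSpace.single j 1) = x j := by
    simp [EuclideanSpace.inner_single_right]
  funext i
  fin_cases i <;>
    simp [L0, L1, sC', coordC, hinner, mul_comm, mul_sub, mul_add, sub_mul, add_mul] <;>
      fin_cases j <;>
        simp [Fin.ext_iff, mul_comm]

lemma fderiv_spinor (x : EuclideanSpace ℝ (Fin 3)) :
    fderiv ℝ lossYauSpinor x = ContinuousLinearMap.pi ![L0 x, L1 x] := by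
  have he : lossYauSpinor = fun y : EuclideanSpace ℝ (Fin 3) =>
      (![(sfun y : ℂ) * (1 + Complex.I * (y 2 : ℂ)),
         (sfun y : ℂ) * (Complex.I * (y 0 : ℂ) - (y 1 : ℂ))] : Fin 2 → ℂ) :=
    funext spinor_eq
  rw [he]
  exact (spinor_hasFDerivAt x).fderiv

lemma norm_sq_expand (x : EuclideanSpace ℝ (Fin 3)) :
    ‖x‖ ^ 2 = x 0 ^ 2 + x 1 ^ 2 + x 2 ^ 2 := by
  rw [EuclideanSpace.norm_eq, Real.sq_sqrt (by positivity)]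
  simp [Fin.sum_univ_three, sq_abs]

set_option maxHeartbeats 2000000 in
/-- The Loss–Yau spinor is a zero mode of the Weyl–Dirac operator
`σ·(D - A(x))` with the Loss–Yau vector potential: `(σ·D)φ(x) = (σ·A(x))φ(x)` for all
`x ∈ ℝ³`, where `D = -i∇`. -/
theorem lossYau_zero_mode :
    ∀ x : EuclideanSpace ℝ (Fin 3),
      (∑ j, (pauli j).mulVec
          ((-Complex.I) • fderiv ℝ lossYauSpinor x (EuclideanSpace.single j (1 : ℝ))))
        = (∑ j, lossYauA x j • pauli j).mulVec (lossYauSpinor x) := by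
  intro x
  have h2 : (Complex.I)^2 = -1 := Complex.I_sq
  have ht : (0:ℝ) < 1 + ‖x‖ ^ 2 := by positivity
  have hsqpos : 0 < Real.sqrt (1 + ‖x‖ ^ 2) := Real.sqrt_pos.2 ht
  have ha0 : ((Real.sqrt (1 + ‖x‖ ^ 2) : ℝ) : ℂ) ≠ 0 := by
    exact_mod_cast ne_of_gt hsqpos
  have haC : ((Real.sqrt (1 + ‖x‖ ^ 2) : ℝ) : ℂ)^2 = 1 + (‖x‖ : ℂ)^2 := by
    have := Real.sq_sqrt (le_of_lt ht)
    exact_mod_cast congrArg (Complex.ofReal) this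
  have hnorm : (‖x‖ : ℂ)^2 = (x 0 : ℂ)^2 + (x 1 : ℂ)^2 + (x 2 : ℂ)^2 := by
    exact_mod_cast congrArg (Complex.ofReal) (norm_sq_expand x)
  have hT : (1 : ℂ) + (‖x‖:ℂ)^2 ≠ 0 := by
    rw [← haC]; exact pow_ne_zero 2 ha0
  have hkey : (((Real.sqrt (1 + ‖x‖ ^ 2) : ℝ) : ℂ) ^ 3)⁻¹
      = (((Real.sqrt (1 + ‖x‖ ^ 2) : ℝ) : ℂ) ^ 5)⁻¹ * (1 + (‖x‖:ℂ)^2) := by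
    rw [← haC]
    field_simp
  have hI3 : Complex.I ^ 3 = -Complex.I := by
    rw [pow_succ, Complex.I_sq]; ring
  have hI4 : Complex.I ^ 4 = 1 := by
    rw [show (4:ℕ) = 2*2 from rfl, pow_mul, Complex.I_sq]; ring
  have hcinv : ((Real.sqrt (1 + ‖x‖ ^ 2) : ℝ) : ℂ)⁻¹ ≠ 0 := inv_ne_zero ha0
  funext i
  simp only [fderiv_spinor, fderiv_eval, spinor_eq, Fin.sum_univ_three]
  fin_cases i
  · simp [pauli, phi0, xc, w0, cross3, lossYauA, sfun, Matrix.mulVec, dotProduct,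
      Fin.sum_univ_three, Fin.sum_univ_two, Matrix.sum_apply, Matrix.one_apply]
    rw [hkey, hnorm]
    rw [hnorm] at hT
    generalize hd : (((Real.sqrt (1 + ‖x‖ ^ 2) : ℝ) : ℂ) ^ 5)⁻¹ = d
    field_simp
    ring_nf
    simp only [Complex.I_sq, hI3, hI4]
    ring
  · simp [pauli, phi0, xc, w0, cross3, lossYauA, sfun, Matrix.mulVec, dotProduct,
      Fin.sum_univ_three, Fin.sum_univ_two, Matrix.sum_apply, Matrix.one_apply]
    rw [hkey, hnorm]
    rw [hnorm] at hT
    generalize hd : (((Real.sqrt (1 + ‖x‖ ^ 2) : ℝ) : ℂ) ^ 5)⁻¹ = d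
    field_simp
    ring_nf
    simp only [Complex.I_sq, hI3, hI4]
    ring

end
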